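/- Let K/F be a cyclic cubic extension with generator σ of the Galois group, and let c, c' ∈ K× with N(c) ≠ 1, N(c') ≠ 1, and N(c) = N(c'). Then the twisted fields (K, μ) and (K, μ') with μ(x,y) = x·σ(y) − c·σ(x)·y and μ'(x,y) = x·σ(y) − c'·σ(x)·y are isotopic: there exist F-linear isomorphisms f, g, h : K → K with h(μ'(x,y)) = μ(f(x), g(y)) for all x, y. -/

import Mathlib

/-- Twisted fields with the same norm of the twisting element are isotopic. -/
theorem stmt1 (F K : Type*) [Field F] [Field K] [Algebra F K] [IsGalois F K]
    (hdim : Module.finrank F K = 3)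
    (σ : K ≃ₐ[F] K) (hσ : ∀ τ : K ≃ₐ[F] K, τ ∈ Subgroup.zpowers σ)
    (c c' : K) (hc : c ≠ 0) (hc' : c' ≠ 0)
    (hN : Algebra.norm F c ≠ 1) (hN' : Algebra.norm F c' ≠ 1)
    (hNN : Algebra.norm F c = Algebra.norm F c') :
    ∃ f g h : K ≃ₗ[F] K, ∀ x y : K,
      h (x * σ y - c' * σ x * y) = f x * σ (g y) - c * σ (f x) * g y := by
  classical
  have hFD : FiniteDimensional F K := FiniteDimensional.of_finrank_pos (by omega)
  -- the Galois group has cardinality 3, so σ has order 3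
  have hcard : Fintype.card (K ≃ₐ[F] K) = 3 := by
    rw [← Nat.card_eq_fintype_card, IsGalois.card_aut_eq_finrank, hdim]
  have hord : orderOf σ = 3 := by
    rw [orderOf_eq_card_of_forall_mem_zpowers hσ, Nat.card_eq_fintype_card, hcard]
  have hσ3 : σ ^ 3 = 1 := by rw [← hord]; exact pow_orderOf_eq_one σ
  have hσ1 : σ ≠ 1 := by
    intro h
    rw [h, orderOf_one] at hord; omega
  have hσ2 : σ ^ 2 ≠ 1 := by
    intro h
    have := orderOf_dvd_of_pow_eq_one h
    rw [hord] at this; omega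
  have hσ12 : σ ≠ σ ^ 2 := by
    intro h
    apply hσ1
    have h2 : σ * 1 = σ * σ := by rw [mul_one, ← sq, ← h]
    exact (mul_left_cancel h2).symm
  -- the universe of the Galois group
  have hne1 : (1 : K ≃ₐ[F] K) ∉ ({σ, σ ^ 2} : Finset (K ≃ₐ[F] K)) := by
    simp [Ne.symm hσ1, Ne.symm hσ2]
  have hne2 : σ ∉ ({σ ^ 2} : Finset (K ≃ₐ[F] K)) := by simp [hσ12]
  have huniv : (Finset.univ : Finset (K ≃ₐ[F] K)) = {1, σ, σ ^ 2} := by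
    symm
    apply Finset.eq_univ_of_card
    rw [hcard, Finset.card_insert_of_notMem hne1, Finset.card_insert_of_notMem hne2,
      Finset.card_singleton]
  -- η = c / c' has norm 1
  set η : K := c / c' with hη
  have hη0 : η ≠ 0 := div_ne_zero hc hc'
  have hNc' : Algebra.norm F c' ≠ 0 := by
    rwa [Algebra.norm_ne_zero_iff]
  have hNη : Algebra.norm F η = 1 := by
    have : η * c' = c := div_mul_cancel₀ c hc'
    have h2 : Algebra.norm F η * Algebra.norm F c' = Algebra.norm F c := by
      rw [← map_mul, this]
    exact mul_right_cancel₀ hNc' (by rw [h2, hNN, one_mul])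
  -- so η * σ η * σ² η = 1
  have hprod : η * σ η * (σ ^ 2) η = 1 := by
    have := Algebra.norm_eq_prod_automorphisms F η
    rw [huniv, Finset.prod_insert hne1, Finset.prod_insert hne2, Finset.prod_singleton,
      hNη, map_one] at this
    simpa [AlgEquiv.one_apply, ← mul_assoc] using this.symm
  -- Dedekind independence: the map z ↦ z + η σ z + (η σ η) σ² z is not identically 0
  have li : LinearIndependent K (fun (τ : K ≃ₐ[F] K) => (τ : K → K)) :=
    LinearIndependent.comp (ι' := K ≃ₐ[F] K)
      (linearIndependent_monoidHom K K) (fun f => f)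
      (fun x y h => by ext t; exact DFunLike.ext_iff.1 h t)
  have hex : ∃ z : K, z + η * σ z + (η * σ η) * (σ ^ 2) z ≠ 0 := by
    by_contra H
    push_neg at H
    have hli := Fintype.linearIndependent_iff.1 li
      (fun τ => if τ = 1 then 1 else if τ = σ then η else if τ = σ ^ 2 then η * σ η else 0)
    have h0 : (∑ τ : K ≃ₐ[F] K,
        (if τ = 1 then (1 : K) else if τ = σ then η else if τ = σ ^ 2 then η * σ η else 0)
          • (τ : K → K)) = 0 := by
      funext z
      rw [huniv] at *
      rw [Finset.sum_insert hne1, Finset.sum_insert hne2, Finset.sum_singleton]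
      simp only [if_pos rfl, if_neg hσ1, if_neg hσ2, if_neg (Ne.symm hσ12)]
      have := H z
      simp only [Pi.add_apply, Pi.smul_apply, Pi.zero_apply, smul_eq_mul]
      rw [← add_assoc]
      simpa [one_smul] using this
    have := hli h0 1
    simp at this
  obtain ⟨z, hz⟩ := hex
  set a : K := z + η * σ z + (η * σ η) * (σ ^ 2) z with ha
  -- key identity: η * σ a = a
  have hσa : η * σ a = a := by
    have h2 : σ (σ z) = (σ ^ 2) z := by rw [sq]; rfl
    have h3 : σ ((σ ^ 2) z) = z := by
      have h : (σ * σ ^ 2) z = z := by rw [← pow_succ', hσ3]; rfl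
      simpa using h
    have h2η : σ (σ η) = (σ ^ 2) η := by rw [sq]; rfl
    have expand : σ a = σ z + σ η * (σ ^ 2) z + (σ η * (σ ^ 2) η) * z := by
      rw [ha, map_add, map_add, map_mul, map_mul, map_mul, h2, h3, h2η]
    have h5 : η * σ a = η * σ z + (η * σ η) * (σ ^ 2) z + (η * σ η * (σ ^ 2) η) * z := by
      rw [expand]; ring
    rw [h5, hprod, one_mul, ha]; ring
  have hkey : a * c' = c * σ a := by
    have h : η * σ a = a := hσa
    rw [hη] at h
    field_simp at h
    first
    | exact h.symm
    | linear_combination h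
    | linear_combination -h
  -- the isotopy: f = h = multiplication by a, g = identity
  let e : K ≃ₗ[F] K :=
    { toFun := fun x => a * x
      map_add' := mul_add a
      map_smul' := fun r x => mul_smul_comm r a x
      invFun := fun x => a⁻¹ * x
      left_inv := fun x => by field_simp
      right_inv := fun x => by field_simp }
  refine ⟨e, LinearEquiv.refl F K, e, fun x y => ?_⟩
  show a * (x * σ y - c' * σ x * y) = a * x * σ y - c * σ (a * x) * (LinearEquiv.refl F K) y
  rw [map_mul]
  simp only [LinearEquiv.refl_apply]
  linear_combination (- σ x * y) * hkey
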